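/- Let J, R be n×n complex matrices with J skew-Hermitian and R Hermitian positive semi-definite. Then the matrix J - R has an eigenvalue on the imaginary axis if and only if there exists an eigenvector v of J with R v = 0. -/

import Mathlib

open Matrix
open scoped ComplexOrder

lemma aux_star_quad (n : ℕ) (M : Matrix (Fin n) (Fin n) ℂ) (v : Fin n → ℂ) :
    star (star v ⬝ᵥ M *ᵥ v) = star v ⬝ᵥ Mᴴ *ᵥ v := by
  rw [star_dotProduct, star_star, star_mulVec, dotProduct_mulVec]

/-- For `J` skew-Hermitian and `R` Hermitian positive semi-definite, `J - R` has an
eigenvalue on the imaginary axis iff some eigenvector of `J` lies in the kernel of `R`. -/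
theorem stmt_0 (n : ℕ) (J R : Matrix (Fin n) (Fin n) ℂ)
    (hJ : Jᴴ = -J) (hR : R.PosSemidef) :
    (∃ (lam : ℂ) (v : Fin n → ℂ), v ≠ 0 ∧ (J - R) *ᵥ v = lam • v ∧ lam.re = 0) ↔
    (∃ (mu : ℂ) (v : Fin n → ℂ), v ≠ 0 ∧ J *ᵥ v = mu • v ∧ R *ᵥ v = 0) := by
  constructor
  · rintro ⟨lam, v, hv, heig, hre⟩
    -- set up the quadratic forms
    have hcim : (star v ⬝ᵥ v).im = 0 := by
      have := aux_star_quad n 1 v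
      simp only [one_mulVec, conjTranspose_one] at this
      have := congrArg Complex.im this
      simp [Complex.ext_iff] at this
      linarith
    have haJ : (star v ⬝ᵥ J *ᵥ v).re = 0 := by
      have h1 := aux_star_quad n J v
      rw [hJ, neg_mulVec, dotProduct_neg] at h1
      have := congrArg Complex.re h1
      simp only [Complex.star_def, Complex.conj_re, Complex.neg_re] at this
      linarith
    have hbR : 0 ≤ star v ⬝ᵥ R *ᵥ v := hR.dotProduct_mulVec_nonneg v
    rw [Complex.le_def] at hbR
    -- the eigenvalue equation gives (a - b) = lam * c
    have heq : star v ⬝ᵥ J *ᵥ v - star v ⬝ᵥ R *ᵥ v = lam * (star v ⬝ᵥ v) := by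
      have := congrArg (fun w => star v ⬝ᵥ w) heig
      simpa [sub_mulVec, dotProduct_sub, dotProduct_smul, smul_eq_mul] using this
    have hre' := congrArg Complex.re heq
    simp only [Complex.sub_re, Complex.mul_re, hre, hcim, haJ] at hre'
    have hb0 : star v ⬝ᵥ R *ᵥ v = 0 := by
      apply Complex.ext <;> simp [← hbR.2] <;> linarith [hbR.1]
    have hRv : R *ᵥ v = 0 := (hR.dotProduct_mulVec_zero_iff v).mp hb0
    refine ⟨lam, v, hv, ?_, hRv⟩
    have : (J - R) *ᵥ v = J *ᵥ v - R *ᵥ v := by rw [sub_mulVec]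
    rw [this, hRv, sub_zero] at heig
    exact heig
  · rintro ⟨mu, v, hv, heig, hRv⟩
    refine ⟨mu, v, hv, ?_, ?_⟩
    · rw [sub_mulVec, hRv, sub_zero, heig]
    · -- mu is purely imaginary
      have hc0 : star v ⬝ᵥ v ≠ 0 := fun h => hv (dotProduct_star_self_eq_zero.mp h)
      have hcim : (star v ⬝ᵥ v).im = 0 := by
        have := aux_star_quad n 1 v
        simp only [one_mulVec, conjTranspose_one] at this
        have := congrArg Complex.im this
        simp [Complex.ext_iff] at this
        linarith
      have h1 := aux_star_quad n J v
      rw [hJ, neg_mulVec, dotProduct_neg, heig, dotProduct_smul, smul_eq_mul] at h1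
      have := congrArg Complex.re h1
      simp only [Complex.star_def, Complex.conj_re, Complex.neg_re, Complex.mul_re, hcim] at this
      have hcre : (star v ⬝ᵥ v).re ≠ 0 := by
        intro h; exact hc0 (Complex.ext h hcim)
      have : mu.re * (star v ⬝ᵥ v).re = 0 := by linarith
      rcases mul_eq_zero.mp this with h | h
      · exact h
      · exact absurd h hcre
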